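/- Let k be a differential field of characteristic 0 with field of constants C ≠ k, let R = k[∂; 1, '], let A ∈ M(n,R), and set M := R^n / R^n A. For any differential field extension l of k whose field of constants equals C, the contravariant solution space V := Hom_R(M, l) satisfies dim_C V ≤ dim_k M. -/

import Mathlib

/-- `R`, together with the embedding `ι : k →+* R` and the element `x : R`, is a
left skew polynomial ring `k[x; α, δ]`: `δ` is an `α`-derivation, the commutation
rule `x * a = α a * x + δ a` holds, and every element of `R` is uniquely a
polynomial `a₀ + a₁ x + ⋯ + aₘ xᵐ` with coefficients in `k`. -/
structure IsSkewPolynomialRing (k R : Type*) [Field k] [Ring R]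
    (α : k →+* k) (δ : k → k) (ι : k →+* R) (x : R) : Prop where
  delta_add : ∀ a b : k, δ (a + b) = δ a + δ b
  delta_mul : ∀ a b : k, δ (a * b) = δ a * α b + a * δ b
  commute_x : ∀ a : k, x * ι a = ι (α a) * x + ι (δ a)
  repr_bijective : Function.Bijective fun p : ℕ →₀ k => p.sum fun i a => ι a * x ^ i

/-- The degree of a (nonzero) element of the skew polynomial ring, read off from its
unique representation as a polynomial in `x`. (Junk value `0` at `r = 0`.) -/
noncomputable def skewDeg {k R : Type*} [Field k] [Ring R] {α : k →+* k} {δ : k → k}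
    {ι : k →+* R} {x : R} (h : IsSkewPolynomialRing k R α δ ι x) (r : R) : ℕ :=
  (((Equiv.ofBijective _ h.repr_bijective).symm r).support.max).unbotD 0

/-- `dim_k (Rⁿ / Rⁿ A) ∈ ℕ ∪ {∞}`: the `k`-dimension of the quotient of the space of
row vectors `Rⁿ` by the left `R`-submodule `Rⁿ A` spanned by the rows of `A`. -/
noncomputable def quotDim (k : Type*) {R : Type*} [Field k] [Ring R] (ι : k →+* R)
    {n : ℕ} (A : Matrix (Fin n) (Fin n) R) : ℕ∞ :=
  letI : Module k ((Fin n → R) ⧸ Submodule.span R (Set.range fun i => A i)) :=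
    Module.compHom _ ι
  Cardinal.toENat
    (Module.rank k ((Fin n → R) ⧸ Submodule.span R (Set.range fun i => A i)))

/-- Key Wronskian-type lemma: solutions that are linearly independent over constants
are linearly independent over `l`. -/
theorem solution_indep {k l M : Type*} [Field k] [Field l]
    (d : k → k) (e : k →+* l) (dl : l → l)
    (hdl_add : ∀ a b : l, dl (a + b) = dl a + dl b)
    (hdl_mul : ∀ a b : l, dl (a * b) = dl a * b + a * dl b)
    (hconst : ∀ y : l, dl y = 0 → ∃ c : k, d c = 0 ∧ y = e c)
    {m : ℕ} (V : Fin m → M → l) (D : M → M)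
    (hD : ∀ i z, V i (D z) = dl (V i z))
    (hind : ∀ c : Fin m → k, (∀ i, d (c i) = 0) →
      (∀ z, ∑ i, e (c i) * V i z = 0) → ∀ i, c i = 0)
    (a : Fin m → l) (ha : ∀ z, ∑ i, a i * V i z = 0) : ∀ i, a i = 0 := by
  let DL : l →+ l := AddMonoidHom.mk' dl hdl_add
  have dl0 : dl 0 = 0 := DL.map_zero
  have dl1 : dl 1 = 0 := by
    have := hdl_mul 1 1
    simp only [mul_one, one_mul] at this
    exact (left_eq_add.mp this)
  suffices H : ∀ s : Finset (Fin m), ∀ a : Fin m → l, (∀ i ∉ s, a i = 0) →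
      (∀ z, ∑ i, a i * V i z = 0) → ∀ i, a i = 0 by
    exact H Finset.univ a (fun i hi => absurd (Finset.mem_univ i) hi) ha
  intro s
  induction s using Finset.strongInduction with
  | _ s IH =>
    intro a h0 ha
    by_contra hcon
    push_neg at hcon
    obtain ⟨j, hj⟩ := hcon
    have hjs : j ∈ s := by
      by_contra hjs
      exact hj (h0 j hjs)
    set a' : Fin m → l := fun i => (a j)⁻¹ * a i with ha'def
    have ha' : ∀ z, ∑ i, a' i * V i z = 0 := by
      intro z
      have : ∑ i, a' i * V i z = (a j)⁻¹ * ∑ i, a i * V i z := by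
        rw [Finset.mul_sum]
        exact Finset.sum_congr rfl fun i _ => by rw [ha'def]; ring
      rw [this, ha z, mul_zero]
    have ha'j : a' j = 1 := by
      rw [ha'def]
      exact inv_mul_cancel₀ hj
    set b : Fin m → l := fun i => dl (a' i) with hbdef
    have hb : ∀ z, ∑ i, b i * V i z = 0 := by
      intro z
      have h1 : dl (∑ i, a' i * V i z) = 0 := by rw [ha' z]; exact dl0
      have h2 : dl (∑ i, a' i * V i z) = ∑ i, dl (a' i * V i z) :=
        map_sum DL (fun i => a' i * V i z) Finset.univ
      have h3 : ∀ i, dl (a' i * V i z) = b i * V i z + a' i * V i (D z) := by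
        intro i
        rw [hdl_mul, hD]
      have h4 : ∑ i, dl (a' i * V i z)
          = (∑ i, b i * V i z) + ∑ i, a' i * V i (D z) := by
        rw [← Finset.sum_add_distrib]
        exact Finset.sum_congr rfl fun i _ => h3 i
      have h5 := ha' (D z)
      rw [h2, h4, h5, add_zero] at h1
      exact h1
    have hbz : ∀ i, b i = 0 := by
      apply IH (s.erase j) (Finset.erase_ssubset hjs)
      · intro i hi
        rcases Finset.mem_erase.not.mp hi with hi'
        push_neg at hi'
        by_cases hij : i = j
        · subst hij
          rw [hbdef]
          simp only
          rw [ha'j]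
          exact dl1
        · have : i ∉ s := hi' hij
          rw [hbdef]
          simp only
          rw [ha'def]
          simp only [h0 i this, mul_zero]
          exact dl0
      · exact hb
    choose c hc1 hc2 using fun i => hconst (a' i) (hbz i)
    have := hind c hc1 (by
      intro z
      have : ∀ i, e (c i) * V i z = a' i * V i z := fun i => by rw [← hc2 i]
      rw [Finset.sum_congr rfl fun i _ => this i]
      exact ha' z)
    have : a' j = 0 := by rw [hc2 j, this j, map_zero]
    rw [ha'j] at this
    exact one_ne_zero this

/-- Let `k` be a differential field of characteristic `0` with field
of constants `C ≠ k`, `R = k[∂; 1, ']`, `A ∈ M(n,R)`, and `M := Rⁿ / Rⁿ A`.  For any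
differential field extension `l` of `k` whose field of constants equals `C`, the
contravariant solution space `V := Hom_R(M, l)` satisfies `dim_C V ≤ dim_k M`:
every `C`-linearly independent family in `V` has at most `dim_k M` members. -/


theorem statement14 {k R l : Type*} [Field k] [CharZero k] [Ring R] [Field l]
    (d : k → k) (ι : k →+* R) (x : R)
    (h : IsSkewPolynomialRing k R (RingHom.id k) d ι x)
    (hC : ∃ a : k, d a ≠ 0)
    (e : k →+* l) (dl : l → l)
    (hdl_add : ∀ a b : l, dl (a + b) = dl a + dl b)
    (hdl_mul : ∀ a b : l, dl (a * b) = dl a * b + a * dl b)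
    (he : ∀ a : k, dl (e a) = e (d a))
    -- the field of constants of `l` equals `C`, the field of constants of `k`
    (hconst : ∀ y : l, dl y = 0 → ∃ c : k, d c = 0 ∧ y = e c)
    -- `l` is a left `R`-module via `a · y = e a * y` and `∂ · y = dl y`
    [Module R l]
    (hsmul_const : ∀ (a : k) (y : l), ι a • y = e a * y)
    (hsmul_x : ∀ y : l, x • y = dl y)
    {n : ℕ} (A : Matrix (Fin n) (Fin n) R) :
    ∀ (m : ℕ)
      (v : Fin m → (((Fin n → R) ⧸ Submodule.span R (Set.range fun i => A i)) →ₗ[R] l)),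
      (∀ c : Fin m → k, (∀ i, d (c i) = 0) →
        (∀ z, ∑ i, e (c i) * v i z = 0) → ∀ i, c i = 0) →
      (m : ℕ∞) ≤ quotDim k ι A := by
  unfold quotDim
  intro m v hind
  set M := (Fin n → R) ⧸ Submodule.span R (Set.range fun i => A i) with hM
  letI : Module k M := Module.compHom _ ι
  by_cases hfin : Module.rank k M < Cardinal.aleph0
  · -- finite-dimensional case
    haveI : Module.Finite k M := Module.rank_lt_aleph0_iff.mp hfin
    set dd := Module.finrank k M with hdd
    let b : Module.Basis (Fin dd) k M := Module.finBasis k M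
    -- step A: relations determined on basis
    have stepA : ∀ (a : Fin m → l), (∀ j, ∑ i, a i * v i (b j) = 0) →
        ∀ z : M, ∑ i, a i * v i z = 0 := by
      intro a hbrel z
      have hz : z ∈ Submodule.span k (Set.range b) := by
        rw [b.span_eq]; trivial
      induction hz using Submodule.span_induction with
      | mem w hw => obtain ⟨j, rfl⟩ := hw; exact hbrel j
      | zero => simp
      | add y z _ _ hy hz =>
        simp only [map_add, mul_add, Finset.sum_add_distrib, hy, hz, add_zero]
      | smul c z _ hz =>
        have hcz : c • z = ι c • z := rfl
        have : ∀ i : Fin m, v i (c • z) = e c * v i z := by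
          intro i
          rw [hcz, map_smul, hsmul_const]
        calc ∑ i, a i * v i (c • z) = e c * ∑ i, a i * v i z := by
              rw [Finset.mul_sum]
              exact Finset.sum_congr rfl fun i _ => by rw [this i]; ring
          _ = 0 := by rw [hz, mul_zero]
    -- step B: linear independence over l of values on basis
    have stepB : LinearIndependent l (fun i (j : Fin dd) => v i (b j)) := by
      rw [Fintype.linearIndependent_iff]
      intro g hg
      have hgj : ∀ j, ∑ i, g i * v i (b j) = 0 := by
        intro j
        have := congrFun hg j
        simpa using this
      have hrel : ∀ z : M, ∑ i, g i * v i z = 0 := stepA g hgj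
      exact solution_indep d e dl hdl_add hdl_mul hconst (fun i z => v i z)
        (fun z => x • z) (fun i z => by show v i (x • z) = dl (v i z); rw [map_smul, hsmul_x]) hind g hrel
    have hmn : m ≤ dd := by
      have h1 := stepB.cardinal_lift_le_rank
      rwa [Cardinal.mk_fin, rank_fin_fun, Cardinal.lift_natCast, Cardinal.lift_natCast,
        Nat.cast_le] at h1
    have hrk : Module.rank k M = (dd : Cardinal) := (Module.finrank_eq_rank k M).symm
    rw [hrk]
    simp only [Cardinal.toENat_nat]
    exact_mod_cast hmn
  · rw [Cardinal.toENat_eq_top.mpr (not_lt.mp hfin)]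
    exact le_top
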